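/- For every integer n ≥ 1, T_{n+1}(x) = x · ∑_{k=0}^{n} C(n,k) S_k(x) N_{n−k}(x²), where C(n,k) is the binomial coefficient, as an identity of polynomials. -/
import Mathlib


/-- The numbers T(n,k) defined by T(1,1) = 1, T(1,k) = 0 for k ≠ 1, and the
recurrence T(n+1,k) = k·T(n,k) + T(n,k-1) + (2n-k+2)·T(n,k-2) for n ≥ 1.
(The value at n = 0 encodes T_0(x) = 1.) -/
def Tc : ℕ → ℤ → ℤ
  | 0, k => if k = 0 then 1 else 0
  | 1, k => if k = 1 then 1 else 0
  | (n+2), k => k * Tc (n+1) k + Tc (n+1) (k-1) + (2*((n : ℤ)+1) - k + 2) * Tc (n+1) (k-2)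

/-- The polynomial T_n(x) = ∑_(k=1)^(2n-1) T(n,k) x^k for n ≥ 1, with T_0(x) = 1. -/
noncomputable def Tpoly (n : ℕ) : Polynomial ℤ :=
  if n = 0 then 1 else ∑ k ∈ Finset.Icc 1 (2*n - 1), Polynomial.C (Tc n k) * Polynomial.X ^ k

/-- The numbers S(n,k): S(1,1) = S(1,2) = 1, S(1,k) = 0 otherwise, and
S(n,k) = k·S(n-1,k) + S(n-1,k-1) + (2n-k+1)·S(n-1,k-2) for n ≥ 2. -/
def Sc : ℕ → ℤ → ℤ
  | 0, k => if k = 0 then 1 else 0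
  | 1, k => if k = 1 ∨ k = 2 then 1 else 0
  | (n+2), k => k * Sc (n+1) k + Sc (n+1) (k-1) + (2*((n : ℤ)+2) - k + 1) * Sc (n+1) (k-2)

/-- The flag-descent polynomial S_n(x) = ∑_(k=1)^(2n) S(n,k) x^(k-1) for n ≥ 1,
with S_0(x) = 1. -/
noncomputable def Spoly (n : ℕ) : Polynomial ℤ :=
  if n = 0 then 1 else ∑ k ∈ Finset.Icc 1 (2*n), Polynomial.C (Sc n k) * Polynomial.X ^ (k-1)

/-- The polynomials N_n(x) defined by N_0(x) = 1 and
N_(n+1)(x) = (2n+1)x·N_n(x) + 2x(1-x)·N_n'(x). -/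
noncomputable def Npoly : ℕ → Polynomial ℤ
  | 0 => 1
  | (n+1) => Polynomial.C (2*(n : ℤ)+1) * Polynomial.X * Npoly n
      + 2 * Polynomial.X * (1 - Polynomial.X) * Polynomial.derivative (Npoly n)

lemma Tc_zero {n : ℕ} (hn : 1 ≤ n) : ∀ {k : ℤ}, (k ≤ 0 ∨ 2*(n:ℤ) ≤ k) → Tc n k = 0 := by
  induction n with
  | zero => omega
  | succ m ih =>
    intro k hk
    rcases Nat.eq_or_lt_of_le hn with h | h
    · have : m = 0 := by omega
      subst this
      show (if k = 1 then (1:ℤ) else 0) = 0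
      rw [if_neg]; push_cast at hk; omega
    · have hm : 1 ≤ m := by omega
      match m, hm, ih with
      | (p+1), _, ih =>
        show (k * Tc (p+1) k + Tc (p+1) (k-1) + (2*((p : ℤ)+1) - k + 2) * Tc (p+1) (k-2)) = 0
        push_cast at hk
        rw [ih (by omega) (k := k) (by push_cast; omega),
            ih (by omega) (k := k-1) (by push_cast; omega),
            ih (by omega) (k := k-2) (by push_cast; omega)]
        ring

lemma Sc_zero {n : ℕ} (hn : 1 ≤ n) : ∀ {k : ℤ}, (k ≤ 0 ∨ 2*(n:ℤ) < k) → Sc n k = 0 := by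
  induction n with
  | zero => omega
  | succ m ih =>
    intro k hk
    rcases Nat.eq_or_lt_of_le hn with h | h
    · have : m = 0 := by omega
      subst this
      show (if k = 1 ∨ k = 2 then (1:ℤ) else 0) = 0
      rw [if_neg]; push_cast at hk; omega
    · have hm : 1 ≤ m := by omega
      match m, hm, ih with
      | (p+1), _, ih =>
        show (k * Sc (p+1) k + Sc (p+1) (k-1) + (2*((p : ℤ)+2) - k + 1) * Sc (p+1) (k-2)) = 0
        push_cast at hk
        rw [ih (by omega) (k := k) (by push_cast; omega),
            ih (by omega) (k := k-1) (by push_cast; omega),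
            ih (by omega) (k := k-2) (by push_cast; omega)]
        ring
open Polynomial Finset

lemma coeff_Tpoly (n m : ℕ) : (Tpoly n).coeff m = Tc n m := by
  rcases Nat.eq_zero_or_pos n with rfl | hn
  · show (1 : Polynomial ℤ).coeff m = if (m:ℤ) = 0 then 1 else 0
    rcases Nat.eq_zero_or_pos m with rfl | hm
    · simp
    · rw [if_neg (by exact_mod_cast hm.ne')]; simp [Polynomial.coeff_one, hm.ne']
  · rw [Tpoly, if_neg (by omega : n ≠ 0)]
    rw [finset_sum_coeff]
    simp only [coeff_C_mul, coeff_X_pow, mul_ite, mul_one, mul_zero]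
    rw [Finset.sum_ite_eq (Finset.Icc 1 (2*n-1)) m (fun k => Tc n k)]
    by_cases h : m ∈ Finset.Icc 1 (2*n-1)
    · rw [if_pos h]
    · rw [if_neg h]
      simp only [Finset.mem_Icc, not_and_or, not_le] at h
      exact (Tc_zero hn (by push_cast; omega)).symm

lemma Spoly_eq {n : ℕ} (hn : 1 ≤ n) :
    Spoly n = ∑ j ∈ Finset.range (2*n), Polynomial.C (Sc n (j+1)) * Polynomial.X ^ j := by
  rw [Spoly, if_neg (by omega : n ≠ 0), ← Finset.Ico_add_one_right_eq_Icc, Finset.sum_Ico_eq_sum_range]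
  apply Finset.sum_congr (by norm_num)
  intro j hj
  congr 1
  · congr 1; push_cast; ring
  · congr 1; omega

lemma coeff_Spoly {n : ℕ} (hn : 1 ≤ n) (m : ℕ) : (Spoly n).coeff m = Sc n ((m:ℤ)+1) := by
  rw [Spoly_eq hn, finset_sum_coeff]
  simp only [coeff_C_mul, coeff_X_pow, mul_ite, mul_one, mul_zero]
  rw [Finset.sum_ite_eq (Finset.range (2*n)) m (fun j => Sc n ((j:ℤ)+1))]
  by_cases h : m ∈ Finset.range (2*n)
  · rw [if_pos h]
  · rw [if_neg h]
    simp only [Finset.mem_range, not_lt] at h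
    exact (Sc_zero hn (by push_cast; omega)).symm
lemma Tc_rec (p : ℕ) (k : ℤ) : Tc (p+2) k
    = k * Tc (p+1) k + Tc (p+1) (k-1) + (2*((p:ℤ)+1) - k + 2) * Tc (p+1) (k-2) := rfl

lemma T_rec {n : ℕ} (hn : 1 ≤ n) :
    Tpoly (n+1) = Tpoly n * X ^ 1 + (C (2*(n:ℤ)) * Tpoly n) * X^2
      + derivative (Tpoly n) * X ^ 1 - derivative (Tpoly n) * X^3 := by
  obtain ⟨p, rfl⟩ : ∃ p, n = p + 1 := ⟨n-1, by omega⟩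
  ext m
  simp only [coeff_sub, coeff_add, coeff_mul_X_pow', coeff_derivative, coeff_C_mul,
    coeff_Tpoly, Tc_rec]
  have h0 : Tc (p+1) 0 = 0 := Tc_zero (by omega) (by omega)
  have h1 : Tc (p+1) (-1) = 0 := Tc_zero (by omega) (by omega)
  have h2 : Tc (p+1) (-2) = 0 := Tc_zero (by omega) (by omega)
  match m with
  | 0 => norm_num [h0, h1, h2]
  | 1 => norm_num [h0, h1, h2]
  | 2 => norm_num; ring
  | (j+3) =>
    norm_num
    have e1 : (j:ℤ) + 3 - 1 = (j:ℤ) + 2 := by ring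
    have e2 : (j:ℤ) + 3 - 2 = (j:ℤ) + 1 := by ring
    have e3 : (j:ℤ) + 2 + 1 = (j:ℤ) + 3 := by ring
    rw [e1, e2, e3]
    ring
lemma Sc_rec (p : ℕ) (k : ℤ) : Sc (p+2) k
    = k * Sc (p+1) k + Sc (p+1) (k-1) + (2*((p:ℤ)+2) - k + 1) * Sc (p+1) (k-2) := rfl

lemma S_rec (n : ℕ) :
    Spoly (n+1) = Spoly n + Spoly n * X ^ 1 + (C (2*(n:ℤ)) * Spoly n) * X^2
      + derivative (Spoly n) * X ^ 1 - derivative (Spoly n) * X^3 := by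
  rcases Nat.eq_zero_or_pos n with rfl | hn
  · have h1 : Spoly 1 = 1 + X := by
      rw [Spoly_eq le_rfl]
      have a1 : Sc 1 1 = 1 := by decide
      have a2 : Sc 1 2 = 1 := by decide
      norm_num [Finset.sum_range_succ, a1, a2]
    have h0 : Spoly 0 = 1 := by rw [Spoly]; norm_num
    rw [h1, h0]
    simp
  · obtain ⟨p, rfl⟩ : ∃ p, n = p + 1 := ⟨n-1, by omega⟩
    ext m
    simp only [coeff_add, coeff_sub, coeff_mul_X_pow', coeff_derivative, coeff_C_mul,
      coeff_Spoly (by omega : 1 ≤ p + 1 + 1), coeff_Spoly (by omega : 1 ≤ p + 1), Sc_rec]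
    have h0 : Sc (p+1) 0 = 0 := Sc_zero (by omega) (by omega)
    have hm1 : Sc (p+1) (-1) = 0 := Sc_zero (by omega) (by omega)
    match m with
    | 0 => norm_num [h0, hm1]
    | 1 => norm_num [h0, hm1]; ring
    | 2 => norm_num; ring
    | (j+3) =>
      norm_num
      have e1 : (j:ℤ) + 3 + 1 - 2 = (j:ℤ) + 2 := by ring
      have e2 : (j:ℤ) + 2 + 1 = (j:ℤ) + 3 := by ring
      have e3 : (j:ℤ) + 3 - 2 + 1 = (j:ℤ) + 2 := by ring
      have e4 : (j:ℤ) + 3 + 1 = (j:ℤ) + 4 := by ring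
      have e5 : (j:ℤ) + 1 + 1 = (j:ℤ) + 2 := by ring
      rw [e1, e3, e4, e5, e2, show (j:ℤ) + 3 + 1 = (j:ℤ) + 4 from by ring]
      ring
lemma M_rec (n : ℕ) :
    (Npoly (n+1)).comp (X^2) = C (2*(n:ℤ)+1) * X^2 * ((Npoly n).comp (X^2))
      + X * (1 - X^2) * derivative ((Npoly n).comp (X^2)) := by
  rw [show Npoly (n+1)
      = C (2*(n:ℤ)+1) * X * Npoly n + 2 * X * (1 - X) * derivative (Npoly n) from rfl]
  rw [derivative_comp]
  simp only [add_comp, mul_comp, C_comp, X_comp, one_comp, sub_comp, derivative_X_pow,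
    Polynomial.ofNat_comp, map_ofNat]
  norm_num
  ring
lemma S_rec' (k : ℕ) : Spoly (k+1)
    = X * (1 - X^2) * derivative (Spoly k) + (1 + X + C (2*(k:ℤ)) * X^2) * Spoly k := by
  rw [S_rec]; ring

lemma T_rec' {n : ℕ} (hn : 1 ≤ n) : Tpoly (n+1)
    = X * (1 - X^2) * derivative (Tpoly n) + (X + C (2*(n:ℤ)) * X^2) * Tpoly n := by
  rw [T_rec hn]; ring

noncomputable def Mp (k : ℕ) : Polynomial ℤ := (Npoly k).comp (X^2)

lemma Mp_rec (k : ℕ) : Mp (k+1)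
    = C (2*(k:ℤ)+1) * X^2 * Mp k + X * (1 - X^2) * derivative (Mp k) := M_rec k

noncomputable def Apoly (n : ℕ) : Polynomial ℤ :=
  ∑ k ∈ Finset.range (n+1), C ((n.choose k : ℤ)) * Spoly k * Mp (n-k)

lemma A_rec (n : ℕ) : Apoly (n+1)
    = X * (1 - X^2) * derivative (Apoly n) + (1 + X + C (2*(n:ℤ)+1) * X^2) * Apoly n := by
  have hSum2 : (∑ k ∈ Finset.range (n+1), C ((n.choose k:ℤ)) * Spoly k * Mp (n-k+1))
      = (∑ i ∈ Finset.range (n+1), C ((n.choose (i+1):ℤ)) * Spoly (i+1) * Mp (n-i))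
        + C ((n.choose 0:ℤ)) * Spoly 0 * Mp (n+1) := by
    conv_lhs => rw [Finset.sum_range_succ']
    conv_rhs => rw [Finset.sum_range_succ]
    rw [Nat.choose_succ_self]
    push_cast
    rw [Finset.sum_congr rfl (fun i hi => by
      rw [show n - (i+1) + 1 = n - i from by
        have := Finset.mem_range.mp hi; omega])]
    simp
  have key : Apoly (n+1)
      = (∑ i ∈ Finset.range (n+1), C ((n.choose i : ℤ)) * Spoly (i+1) * Mp (n-i))
      + (∑ k ∈ Finset.range (n+1), C ((n.choose k : ℤ)) * Spoly k * Mp (n-k+1)) := by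
    rw [Apoly, Finset.sum_range_succ', hSum2]
    have step : ∀ i ∈ Finset.range (n+1),
        C (((n+1).choose (i+1) : ℤ)) * Spoly (i+1) * Mp (n+1-(i+1))
        = C ((n.choose i : ℤ)) * Spoly (i+1) * Mp (n-i)
          + C ((n.choose (i+1):ℤ)) * Spoly (i+1) * Mp (n-i) := by
      intro i hi
      rw [Nat.choose_succ_succ]
      rw [show n+1-(i+1) = n - i from by omega]
      push_cast
      rw [map_add]
      ring
    rw [Finset.sum_congr rfl step, Finset.sum_add_distrib]
    simp [Nat.choose_zero_right]
    ring
  rw [key]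
  rw [Apoly, derivative_sum]
  rw [Finset.mul_sum, Finset.mul_sum, ← Finset.sum_add_distrib, ← Finset.sum_add_distrib]
  apply Finset.sum_congr rfl
  intro i hi
  have hin : i ≤ n := by have := Finset.mem_range.mp hi; omega
  rw [S_rec' i, Mp_rec (n-i)]
  rw [derivative_mul, derivative_mul, derivative_C]
  have hc : C (2*((n-i:ℕ):ℤ)+1) = C (2*(n:ℤ)+1 - 2*(i:ℤ)) := by
    congr 1
    omega
  rw [hc, map_sub]
  ring
lemma main_id (n : ℕ) : Tpoly (n+1) = X * Apoly n := by
  induction n with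
  | zero =>
    have hA : Apoly 0 = 1 := by
      rw [Apoly]
      simp [Spoly, Mp, show Npoly 0 = 1 from rfl]
    have hT : Tpoly 1 = X := by
      rw [Tpoly]
      norm_num
      decide
    rw [hA, hT, mul_one]
  | succ m ih =>
    rw [T_rec' (by omega : 1 ≤ m+1), ih, A_rec]
    rw [derivative_mul]
    simp only [derivative_X, one_mul]
    have hc : (C (2*((m+1:ℕ):ℤ)) : Polynomial ℤ) = C (2*(m:ℤ)+1) + C 1 := by
      rw [← map_add]; congr 1
    rw [hc, map_one]
    ring

/-- For n ≥ 1, T_(n+1)(x) = x · ∑_(k=0)^(n) C(n,k) S_k(x) N_(n-k)(x²). -/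
theorem stmt12 (n : ℕ) (hn : 1 ≤ n) :
    Tpoly (n+1) = Polynomial.X * ∑ k ∈ Finset.range (n+1),
      Polynomial.C ((n.choose k : ℤ)) * Spoly k
        * ((Npoly (n-k)).comp (Polynomial.X ^ 2)) := by
  rw [main_id n, Apoly]
  rfl
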